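/- Assume f has an L_g-quadratic upper bound with L_g > 0, and let η̄ ∈ (0,1), β > 1, ε ∈ (0,1). Let x ∈ ℝⁿ with g(x) ≠ 0. Then there exists a smallest nonnegative integer j* such that φ(P_{β^{j*}}(x)) < φ(x) − (η̄/β^{j*})·‖G_{β^{j*}}(x)‖², this j* satisfies β^{j*} ≤ max{βL_g/(2 − 2η̄), 1}, and, if moreover ‖G_{β^{j*}}(x)‖ > ε, then φ(x) − φ(P_{β^{j*}}(x)) > (η̄ / max{βL_g/(2 − 2η̄), 1})·ε². -/

import Mathlib

open scoped RealInnerProductSpace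

noncomputable section

/-- `ℝⁿ` with the Euclidean norm. -/
abbrev E (n : ℕ) := EuclideanSpace ℝ (Fin n)

/-- The vector `g(x)` measuring first-order stationarity of `f + lam‖·‖₁`. -/
def gvec (n : ℕ) (f : E n → ℝ) (lam : ℝ) (x : E n) : E n := WithLp.toLp 2 fun i =>
  if 0 < x i then gradient f x i + lam
  else if x i < 0 then gradient f x i - lam
  else gradient f x i - min (max (-lam) (gradient f x i)) lam

/-- The proximal-gradient residual `G_t(x) = t (x - prox_{(lam/t)‖·‖₁}(x - ∇f(x)/t))`. -/
def Gres (n : ℕ) (f : E n → ℝ) (lam t : ℝ) (x : E n) : E n := WithLp.toLp 2 fun i =>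
  if (gradient f x i + lam) / t < x i then gradient f x i + lam
  else if x i < (gradient f x i - lam) / t then gradient f x i - lam
  else t * x i

/-- The proximal-gradient update `P_t(x) = prox_{(lam/t)‖·‖₁}(x - ∇f(x)/t)` (soft-thresholding). -/
def Pt (n : ℕ) (f : E n → ℝ) (lam t : ℝ) (x : E n) : E n := WithLp.toLp 2 fun i =>
  if lam / t < x i - gradient f x i / t then x i - gradient f x i / t - lam / t
  else if x i - gradient f x i / t < -(lam / t) then x i - gradient f x i / t + lam / t
  else 0

/-- The objective `φ(x) = f(x) + lam ‖x‖₁`. -/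
def phi (n : ℕ) (f : E n → ℝ) (lam : ℝ) (x : E n) : ℝ := f x + lam * ∑ i, |x i|

/-- The Hessian of `f` at `x`, as a continuous linear map. -/
def hess (n : ℕ) (f : E n → ℝ) (x : E n) : E n →L[ℝ] E n := fderiv ℝ (gradient f) x

/-- The scaling map `S_{x,ε}`: identity on coordinates with `|x_i| > √ε`, multiplication by
`x_i` on the others. -/
def Smap (n : ℕ) (x : E n) (eps : ℝ) (u : E n) : E n := WithLp.toLp 2 fun i =>
  if Real.sqrt eps < |x i| then u i else x i * u i

/-- The relaxed first-order residual vector `g^ε(x)`. -/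
def gveps (n : ℕ) (f : E n → ℝ) (lam eps : ℝ) (x : E n) : E n := WithLp.toLp 2 fun i =>
  if Real.sqrt eps < x i then gradient f x i + lam
  else if x i < -Real.sqrt eps then gradient f x i - lam
  else gradient f x i -
    min (max (-(lam + eps ^ ((3:ℝ)/4))) (gradient f x i)) (lam + eps ^ ((3:ℝ)/4))

lemma comp_ineq (lam t d xi : ℝ) (ht : 0 < t) (hlam : 0 ≤ lam) :
    lam * |(if lam / t < xi - d / t then xi - d / t - lam / t
      else if xi - d / t < -(lam / t) then xi - d / t + lam / t else 0)| +
    d * ((if lam / t < xi - d / t then xi - d / t - lam / t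
      else if xi - d / t < -(lam / t) then xi - d / t + lam / t else 0) - xi) +
    t * ((if lam / t < xi - d / t then xi - d / t - lam / t
      else if xi - d / t < -(lam / t) then xi - d / t + lam / t else 0) - xi) ^ 2
      ≤ lam * |xi| := by
  have ht' : t ≠ 0 := ht.ne'
  split_ifs with h1 h2
  · have hp : 0 < xi - d / t - lam / t := by
      have : 0 ≤ lam / t := by positivity
      linarith
    rw [abs_of_pos hp]
    have key : lam * (xi - d / t - lam / t) + d * ((xi - d / t - lam / t) - xi)
        + t * ((xi - d / t - lam / t) - xi) ^ 2 = lam * xi := by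
      field_simp; ring
    nlinarith [mul_le_mul_of_nonneg_left (le_abs_self xi) hlam]
  · have hp : xi - d / t + lam / t < 0 := by
      have : 0 ≤ lam / t := by positivity
      linarith
    rw [abs_of_neg hp]
    have key : lam * (-(xi - d / t + lam / t)) + d * ((xi - d / t + lam / t) - xi)
        + t * ((xi - d / t + lam / t) - xi) ^ 2 = -(lam * xi) := by
      field_simp; ring
    nlinarith [mul_le_mul_of_nonneg_left (neg_abs_le xi) hlam]
  · -- p = 0 case: need t xi² - d xi ≤ lam |xi|
    push_neg at h1 h2
    have hA : t * (xi - d / t) ≤ t * (lam / t) := by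
      exact mul_le_mul_of_nonneg_left h1 ht.le
    have hB : t * (-(lam / t)) ≤ t * (xi - d / t) := by
      exact mul_le_mul_of_nonneg_left h2 ht.le
    have e1 : t * (xi - d / t) = t * xi - d := by field_simp
    have e2 : t * (lam / t) = lam := by rw [mul_comm]; field_simp
    have e3 : t * (-(lam / t)) = -lam := by rw [mul_comm]; field_simp
    rw [e1, e2] at hA
    rw [e1, e3] at hB
    rw [abs_zero]
    nlinarith [le_abs_self xi, neg_abs_le xi, abs_nonneg xi]

lemma cond_iff1 (lam t d xi : ℝ) (ht : 0 < t) :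
    (lam / t < xi - d / t) ↔ ((d + lam) / t < xi) := by
  rw [div_lt_iff₀ ht, div_lt_iff₀ ht]
  constructor <;> intro h <;>
    nlinarith [div_mul_cancel₀ d ht.ne', div_mul_cancel₀ lam ht.ne']

lemma cond_iff2 (lam t d xi : ℝ) (ht : 0 < t) :
    (xi - d / t < -(lam / t)) ↔ (xi < (d - lam) / t) := by
  rw [lt_div_iff₀ ht]
  constructor <;> intro h <;>
    nlinarith [div_mul_cancel₀ d ht.ne', div_mul_cancel₀ lam ht.ne',
      mul_pos ht ht]

lemma Gres_eq_comp (n : ℕ) (f : E n → ℝ) (lam t : ℝ) (x : E n) (ht : 0 < t) (i : Fin n) :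
    Gres n f lam t x i = t * (x i - Pt n f lam t x i) := by
  have ht' : t ≠ 0 := ht.ne'
  simp only [Gres, Pt]
  have c1 := cond_iff1 lam t (gradient f x i) (x i) ht
  have c2 := cond_iff2 lam t (gradient f x i) (x i) ht
  by_cases h1 : (gradient f x i + lam) / t < x i
  · rw [if_pos h1, if_pos (c1.mpr h1)]; field_simp; ring
  · rw [if_neg h1, if_neg (fun h => h1 (c1.mp h))]
    by_cases h2 : x i < (gradient f x i - lam) / t
    · rw [if_pos h2, if_pos (c2.mpr h2)]; field_simp; ring
    · rw [if_neg h2, if_neg (fun h => h2 (c2.mp h))]; ring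

lemma Gres_ne_zero (n : ℕ) (f : E n → ℝ) (lam t : ℝ) (x : E n) (ht : 0 < t)
    (hlam : 0 < lam) (hx : gvec n f lam x ≠ 0) : Gres n f lam t x ≠ 0 := by
  intro hG
  apply hx
  ext i
  have hGi : Gres n f lam t x i = 0 := by rw [hG]; rfl
  simp only [Gres] at hGi
  simp only [gvec]
  show _ = (0 : E n) i
  split_ifs at hGi with h1 h2
  · -- (d+lam)/t < x i and d + lam = 0, so d = -lam, x i > -0/t... x i > 0
    have hx0 : 0 < x i := by
      have : (gradient f x i + lam) / t = 0 := by rw [hGi]; simp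
      linarith [this ▸ h1]
    rw [if_pos hx0]
    simpa using hGi
  · have hx0 : x i < 0 := by
      have : (gradient f x i - lam) / t = 0 := by rw [hGi]; simp
      linarith [this ▸ h2]
    rw [if_neg (by linarith), if_pos hx0]
    simpa using hGi
  · have hx0 : x i = 0 := by
      rcases mul_eq_zero.mp hGi with h | h
      · exact absurd h ht.ne'
      · exact h
    push_neg at h1 h2
    rw [hx0] at h1 h2
    have hdl : gradient f x i ≤ lam := by
      have := (div_nonpos_iff.mp (by linarith [h2] : (gradient f x i - lam)/t ≤ 0))
      rcases this with ⟨ha, _⟩ | ⟨_, hb⟩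
      · linarith
      · linarith
    have hdg : -lam ≤ gradient f x i := by
      have := (div_nonneg_iff.mp (by linarith [h1] : 0 ≤ (gradient f x i + lam)/t))
      rcases this with ⟨ha, _⟩ | ⟨_, hb⟩
      · linarith
      · linarith
    rw [if_neg (by simp [hx0]), if_neg (by simp [hx0])]
    have : min (max (-lam) (gradient f x i)) lam = gradient f x i := by
      rw [max_eq_right hdg, min_eq_left hdl]
    simp [this]

lemma decrease {n : ℕ} (f : E n → ℝ) (lam : ℝ) (hlam : 0 < lam)
    (Lg : ℝ) (hLg : 0 < Lg)
    (hquad : ∀ x y : E n, ∀ L : ℝ, Lg ≤ L →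
      f y ≤ f x + ⟪gradient f x, y - x⟫ + L / 2 * ‖y - x‖ ^ 2)
    (ηb : ℝ) (hη : ηb ∈ Set.Ioo (0:ℝ) 1) (x : E n) (t : ℝ) (ht : 0 < t)
    (hG : Gres n f lam t x ≠ 0) (htL : Lg / (2 - 2 * ηb) < t) :
    phi n f lam (Pt n f lam t x) < phi n f lam x - ηb / t * ‖Gres n f lam t x‖ ^ 2 := by
  set P := Pt n f lam t x with hP
  set S : ℝ := ∑ i, (P i - x i) ^ 2 with hSdef
  -- S positive
  have hSpos : 0 < S := by
    have : ∃ i, Gres n f lam t x i ≠ 0 := by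
      by_contra h
      push_neg at h
      exact hG (PiLp.ext h)
    obtain ⟨i, hi⟩ := this
    have hPi : P i - x i ≠ 0 := by
      intro h
      apply hi
      rw [Gres_eq_comp n f lam t x ht i]
      have : x i - P i = 0 := by linarith [sub_eq_zero.mp h]
      rw [this, mul_zero]
    have h1 : 0 < (P i - x i) ^ 2 := by positivity
    calc (0:ℝ) < (P i - x i)^2 := h1
      _ ≤ S := Finset.single_le_sum (f := fun j => (P j - x j) ^ 2)
        (fun j _ => by positivity) (Finset.mem_univ i)
  -- norm of Gres
  have hnormG : ‖Gres n f lam t x‖ ^ 2 = t ^ 2 * S := by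
    rw [EuclideanSpace.norm_eq, Real.sq_sqrt (by positivity)]
    rw [hSdef, Finset.mul_sum]
    apply Finset.sum_congr rfl
    intro i _
    rw [Gres_eq_comp n f lam t x ht i]
    rw [Real.norm_eq_abs, sq_abs]
    ring
  -- inner product
  have hinner : ⟪gradient f x, P - x⟫ = ∑ i, gradient f x i * (P i - x i) := by
    rw [PiLp.inner_apply]
    apply Finset.sum_congr rfl
    intro i _
    simp [mul_comm]
  have hnormP : ‖P - x‖ ^ 2 = S := by
    rw [EuclideanSpace.norm_eq, Real.sq_sqrt (by positivity)]
    apply Finset.sum_congr rfl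
    intro i _
    rw [Real.norm_eq_abs, sq_abs]
    rfl
  -- quadratic bound
  have hq := hquad x P Lg le_rfl
  rw [hinner, hnormP] at hq
  -- prox inequality summed
  have hprox : lam * ∑ i, |P i| + (∑ i, gradient f x i * (P i - x i)) + t * S
      ≤ lam * ∑ i, |x i| := by
    have hc := Finset.sum_le_sum (s := Finset.univ)
      (f := fun i => lam * |P i| + gradient f x i * (P i - x i) + t * (P i - x i) ^ 2)
      (g := fun i => lam * |x i|)
      (fun i _ => comp_ineq lam t (gradient f x i) (x i) ht hlam.le)
    simp only [Finset.sum_add_distrib, ← Finset.mul_sum] at hc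
    rw [hSdef]
    linarith [hc]
  -- combine
  have hcomb : phi n f lam P ≤ phi n f lam x - (t - Lg / 2) * S := by
    simp only [phi]
    nlinarith [hq, hprox]
  have hkey : ηb / t * ‖Gres n f lam t x‖ ^ 2 = ηb * t * S := by
    rw [hnormG]; field_simp
  rw [hkey]
  have hlt : ηb * t * S < (t - Lg / 2) * S := by
    apply mul_lt_mul_of_pos_right _ hSpos
    have h2 : 0 < 2 - 2 * ηb := by nlinarith [hη.2]
    have := (div_lt_iff₀ h2).mp htL
    nlinarith [hη.1]
  linarith

/-- The backtracking proximal-gradient line search terminates at a smallest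
index `j*`, the accepted stepsize parameter satisfies `β^{j*} ≤ max{βL_g/(2-2η̄), 1}`, and if
the accepted residual exceeds `ε` then the objective decreases by more than
`(η̄ / max{βL_g/(2-2η̄), 1}) ε²`. -/
theorem stmt5 {n : ℕ} (f : E n → ℝ) (hf : Differentiable ℝ f) (lam : ℝ) (hlam : 0 < lam)
    (Lg : ℝ) (hLg : 0 < Lg)
    (hquad : ∀ x y : E n, ∀ L : ℝ, Lg ≤ L →
      f y ≤ f x + ⟪gradient f x, y - x⟫ + L / 2 * ‖y - x‖ ^ 2)
    (ηb β ε : ℝ) (hη : ηb ∈ Set.Ioo (0:ℝ) 1) (hβ : 1 < β) (hε : ε ∈ Set.Ioo (0:ℝ) 1)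
    (x : E n) (hx : gvec n f lam x ≠ 0) :
    ∃ j : ℕ,
      (phi n f lam (Pt n f lam (β ^ j) x) <
          phi n f lam x - ηb / β ^ j * ‖Gres n f lam (β ^ j) x‖ ^ 2) ∧
      (∀ j' < j, ¬(phi n f lam (Pt n f lam (β ^ j') x) <
          phi n f lam x - ηb / β ^ j' * ‖Gres n f lam (β ^ j') x‖ ^ 2)) ∧
      β ^ j ≤ max (β * Lg / (2 - 2 * ηb)) 1 ∧
      (ε < ‖Gres n f lam (β ^ j) x‖ →
        ηb / max (β * Lg / (2 - 2 * ηb)) 1 * ε ^ 2 <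
          phi n f lam x - phi n f lam (Pt n f lam (β ^ j) x)) := by
  classical
  obtain ⟨hη0, hη1⟩ := hη
  have hβ0 : 0 < β := by linarith
  have h2 : 0 < 2 - 2 * ηb := by linarith
  have hT0 : (0:ℝ) < max (β * Lg / (2 - 2 * ηb)) 1 :=
    lt_of_lt_of_le one_pos (le_max_right _ _)
  have hdec : ∀ k : ℕ, Lg / (2 - 2 * ηb) < β ^ k →
      phi n f lam (Pt n f lam (β ^ k) x) <
        phi n f lam x - ηb / β ^ k * ‖Gres n f lam (β ^ k) x‖ ^ 2 := fun k hk =>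
    decrease f lam hlam Lg hLg hquad ηb ⟨hη0, hη1⟩ x (β ^ k) (pow_pos hβ0 k)
      (Gres_ne_zero n f lam (β ^ k) x (pow_pos hβ0 k) hlam hx) hk
  have hex : ∃ j : ℕ, phi n f lam (Pt n f lam (β ^ j) x) <
      phi n f lam x - ηb / β ^ j * ‖Gres n f lam (β ^ j) x‖ ^ 2 := by
    obtain ⟨N, hN⟩ := pow_unbounded_of_one_lt (Lg / (2 - 2 * ηb)) hβ
    exact ⟨N, hdec N hN⟩
  set j := Nat.find hex with hj
  have hjT : β ^ j ≤ max (β * Lg / (2 - 2 * ηb)) 1 := by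
    by_cases hj0 : j = 0
    · rw [hj0, pow_zero]; exact le_max_right _ _
    · obtain ⟨k, hk⟩ := Nat.exists_eq_succ_of_ne_zero hj0
      have hnot := Nat.find_min hex (show k < j by omega)
      have hk' : β ^ k ≤ Lg / (2 - 2 * ηb) := by
        by_contra hc
        push_neg at hc
        exact hnot (hdec k hc)
      rw [hk, pow_succ]
      calc β ^ k * β ≤ Lg / (2 - 2 * ηb) * β :=
            mul_le_mul_of_nonneg_right hk' hβ0.le
        _ = β * Lg / (2 - 2 * ηb) := by ring
        _ ≤ max (β * Lg / (2 - 2 * ηb)) 1 := le_max_left _ _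
  refine ⟨j, Nat.find_spec hex, fun j' hj' => Nat.find_min hex hj', hjT, ?_⟩
  intro hGε
  have hspec := Nat.find_spec hex
  have hpow : (0:ℝ) < β ^ j := pow_pos hβ0 j
  have h1 : ηb / max (β * Lg / (2 - 2 * ηb)) 1 * ε ^ 2 ≤ ηb / β ^ j * ε ^ 2 := by
    gcongr
  have h2' : ηb / β ^ j * ε ^ 2 < ηb / β ^ j * ‖Gres n f lam (β ^ j) x‖ ^ 2 := by
    apply mul_lt_mul_of_pos_left _ (div_pos hη0 hpow)
    exact pow_lt_pow_left₀ hGε hε.1.le (by norm_num)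
  linarith
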